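/- Let r, s be real with 0 < s, 2s < r, and r + 5s/3 < 1, and suppose 2/3 + s ≤ r. Set q₁ = (2(r − s) − 1, r − s), q₂ = (1 − r + s, r − s), q₃ = (1 − r + s, 2(1 − r + s)). Then q₁ and q₂ lie in the closed region D3 = {(x₁, x₂) : s ≤ x₁ ≤ r − s, r − s ≤ x₂ ≤ r}, q₃ lies in the closed region D1 = {(x₁, x₂) : 0 ≤ x₁ ≤ x₂ ≤ r − s}, and F₃(q₁) = q₂, F₃(q₂) = q₃, F₁(q₃) = q₁; i.e. (q₁, q₂, q₃) is a period-3 orbit with symbolic code 3 → 3 → 1. -/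
import Mathlib

/-- The affine branch of the return-time map on region 3. -/
noncomputable def F3 (r s : ℝ) (p : ℝ × ℝ) : ℝ × ℝ :=
  (1 - 4*p.2/3 + (r - s)/3, 1 - 4*p.2/3 + p.1 + (r - s)/3)

/-- The affine branch of the return-time map on region 1. -/
noncomputable def F1 (p : ℝ × ℝ) : ℝ × ℝ :=
  (1 - p.2, 1 - p.2 + p.1)

/-- The closed region D3. -/
def D3 (r s : ℝ) : Set (ℝ × ℝ) :=
  {p | s ≤ p.1 ∧ p.1 ≤ r - s ∧ r - s ≤ p.2 ∧ p.2 ≤ r}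

/-- The closed region D1. -/
def D1 (r s : ℝ) : Set (ℝ × ℝ) :=
  {p | 0 ≤ p.1 ∧ p.1 ≤ p.2 ∧ p.2 ≤ r - s}

theorem period3_orbit_331 (r s : ℝ) (hs : 0 < s) (hrs : 2*s < r)
    (h1 : r + 5*s/3 < 1) (hlo : 2/3 + s ≤ r) :
    (2*(r - s) - 1, r - s) ∈ D3 r s ∧
    (1 - r + s, r - s) ∈ D3 r s ∧
    (1 - r + s, 2*(1 - r + s)) ∈ D1 r s ∧
    F3 r s (2*(r - s) - 1, r - s) = (1 - r + s, r - s) ∧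
    F3 r s (1 - r + s, r - s) = (1 - r + s, 2*(1 - r + s)) ∧
    F1 (1 - r + s, 2*(1 - r + s)) = (2*(r - s) - 1, r - s) := by
  simp only [D3, D1, F3, F1, Set.mem_setOf_eq, Prod.mk.injEq]
  refine ⟨⟨by linarith, by linarith, by linarith, by linarith⟩,
    ⟨by linarith, by linarith, by linarith, by linarith⟩,
    ⟨by linarith, by linarith, by linarith⟩,
    ⟨by ring, by ring⟩, ⟨by ring, by ring⟩, ⟨by ring, by ring⟩⟩
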